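/- Let Δ be a prime field and let P be its algebraic closure. The assignment F ↦ M(F) is an inclusion-preserving bijection (an order isomorphism of lattices) from the set of Galois extensions F of Δ contained in P, ordered by inclusion, onto the set of subloops of M(P) that are nonassociative simple Moufang loops of the form M(F), ordered by inclusion; under this bijection, intersections of fields correspond to intersections of loops. -/

import Mathlib

namespace Paper

/-- Dot product on `F³`. -/
def dot3 {F : Type*} [Field F] (x y : Fin 3 → F) : F :=
  x 0 * y 0 + x 1 * y 1 + x 2 * y 2

/-- Cross product on `F³`. -/
def cross3 {F : Type*} [Field F] (x y : Fin 3 → F) : Fin 3 → F :=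
  ![x 1 * y 2 - x 2 * y 1, x 2 * y 0 - x 0 * y 2, x 0 * y 1 - x 1 * y 0]

/-- The Zorn vector matrix algebra (matrix Cayley–Dickson / split octonion algebra)
`C(F)`: matrices `(α₁, α₁₂; α₂₁, α₂)` with `α₁, α₂ ∈ F`, `α₁₂, α₂₁ ∈ F³`. -/
@[ext]
structure Zorn (F : Type*) [Field F] where
  a : F
  u : Fin 3 → F
  v : Fin 3 → F
  d : F

namespace Zorn

variable {F : Type*} [Field F]

instance : One (Zorn F) := ⟨⟨1, 0, 0, 1⟩⟩

instance : Neg (Zorn F) := ⟨fun x => ⟨-x.a, -x.u, -x.v, -x.d⟩⟩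

/-- Zorn's multiplication rule. -/
instance : Mul (Zorn F) :=
  ⟨fun x y =>
    ⟨x.a * y.a + dot3 x.u y.v,
     fun i => x.a * y.u i + y.d * x.u i - cross3 x.v y.v i,
     fun i => y.a * x.v i + x.d * y.v i + cross3 x.u y.u i,
     x.d * y.d + dot3 x.v y.u⟩⟩

@[simp] theorem one_a : (1 : Zorn F).a = 1 := rfl
@[simp] theorem one_u : (1 : Zorn F).u = 0 := rfl
@[simp] theorem one_v : (1 : Zorn F).v = 0 := rfl
@[simp] theorem one_d : (1 : Zorn F).d = 1 := rfl
@[simp] theorem neg_a (x : Zorn F) : (-x).a = -x.a := rfl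
@[simp] theorem neg_u (x : Zorn F) : (-x).u = -x.u := rfl
@[simp] theorem neg_v (x : Zorn F) : (-x).v = -x.v := rfl
@[simp] theorem neg_d (x : Zorn F) : (-x).d = -x.d := rfl
@[simp] theorem mul_a (x y : Zorn F) : (x * y).a = x.a * y.a + dot3 x.u y.v := rfl
@[simp] theorem mul_u (x y : Zorn F) :
    (x * y).u = fun i => x.a * y.u i + y.d * x.u i - cross3 x.v y.v i := rfl
@[simp] theorem mul_v (x y : Zorn F) :
    (x * y).v = fun i => y.a * x.v i + x.d * y.v i + cross3 x.u y.u i := rfl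
@[simp] theorem mul_d (x y : Zorn F) : (x * y).d = x.d * y.d + dot3 x.v y.u := rfl

/-- The norm `n(a) = α₁α₂ − ⟨α₁₂, α₂₁⟩`. -/
def norm (x : Zorn F) : F := x.a * x.d - dot3 x.u x.v

theorem norm_one : norm (1 : Zorn F) = 1 := by
  simp [norm, dot3]

theorem norm_neg (x : Zorn F) : norm (-x) = norm x := by
  simp only [norm, neg_a, neg_u, neg_v, neg_d, dot3, Pi.neg_apply]
  ring

theorem norm_mul (x y : Zorn F) : norm (x * y) = norm x * norm y := by
  simp only [norm, mul_a, mul_u, mul_v, mul_d, dot3, cross3]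
  simp only [Matrix.cons_val_zero, Matrix.cons_val_one, Matrix.head_cons,
    Matrix.cons_val_two, Matrix.tail_cons]
  ring

theorem neg_neg' (x : Zorn F) : -(-x) = x := by
  ext <;> simp

theorem neg_mul' (x y : Zorn F) : (-x) * y = -(x * y) := by
  refine Zorn.ext ?_ ?_ ?_ ?_
  · simp [dot3]; ring
  · funext i
    simp [cross3]
    fin_cases i <;> simp <;> ring
  · funext i
    simp [cross3]
    fin_cases i <;> simp <;> ring
  · simp [dot3]; ring

theorem mul_neg' (x y : Zorn F) : x * (-y) = -(x * y) := by
  refine Zorn.ext ?_ ?_ ?_ ?_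
  · simp [dot3]; ring
  · funext i
    simp [cross3]
    fin_cases i <;> simp <;> ring
  · funext i
    simp [cross3]
    fin_cases i <;> simp <;> ring
  · simp [dot3]; ring

end Zorn

/-- `M*(F)`: the elements of norm `1` in the Zorn vector matrix algebra. -/
def Mstar (F : Type*) [Field F] : Type _ := {x : Zorn F // Zorn.norm x = 1}

namespace Mstar

variable {F : Type*} [Field F]

instance : One (Mstar F) := ⟨⟨1, Zorn.norm_one⟩⟩

instance : Neg (Mstar F) := ⟨fun x => ⟨-x.1, by rw [Zorn.norm_neg, x.2]⟩⟩

instance : Mul (Mstar F) :=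
  ⟨fun x y => ⟨x.1 * y.1, by rw [Zorn.norm_mul, x.2, y.2, one_mul]⟩⟩

@[simp] theorem coe_mul (x y : Mstar F) : (x * y).1 = x.1 * y.1 := rfl
@[simp] theorem coe_neg (x : Mstar F) : (-x).1 = -x.1 := rfl
@[simp] theorem coe_one : (1 : Mstar F).1 = 1 := rfl

/-- Identification of `x` and `-x`. -/
instance setoid (F : Type*) [Field F] : Setoid (Mstar F) where
  r x y := x.1 = y.1 ∨ x.1 = -y.1
  iseqv := by
    refine ⟨fun x => Or.inl rfl, ?_, ?_⟩
    · rintro x y (h | h)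
      · exact Or.inl h.symm
      · exact Or.inr (by rw [h, Zorn.neg_neg'])
    · rintro x y z (h1 | h1) (h2 | h2)
      · exact Or.inl (h1.trans h2)
      · exact Or.inr (h1.trans h2)
      · exact Or.inr (by rw [h1, h2])
      · exact Or.inl (by rw [h1, h2, Zorn.neg_neg'])

end Mstar

/-- The Paige loop `M(F) = M*(F)/{±1}`. -/
abbrev Paige (F : Type*) [Field F] := Quotient (Mstar.setoid F)

namespace Paige

variable {F : Type*} [Field F]

instance : One (Paige F) := ⟨⟦1⟧⟩

instance : Mul (Paige F) :=
  ⟨Quotient.map₂ (· * ·) (by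
    rintro a b (hab | hab) c d (hcd | hcd)
    · exact Or.inl (by simp [hab, hcd])
    · exact Or.inr (by simp [hab, hcd, Zorn.mul_neg'])
    · exact Or.inr (by simp [hab, hcd, Zorn.neg_mul'])
    · exact Or.inl (by
        simp [hab, hcd, Zorn.neg_mul', Zorn.mul_neg', Zorn.neg_neg']))⟩

end Paige

section LoopDefs

variable {Q : Type*} [Mul Q] [One Q]

/-- `Q` (with its multiplication and identity) is a Moufang loop. -/
structure IsMoufangLoop (Q : Type*) [Mul Q] [One Q] : Prop where
  one_mul : ∀ a : Q, 1 * a = a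
  mul_one : ∀ a : Q, a * 1 = a
  mulLeft_bijective : ∀ a : Q, Function.Bijective (fun x : Q => a * x)
  mulRight_bijective : ∀ a : Q, Function.Bijective (fun x : Q => x * a)
  moufang : ∀ x y z : Q, ((x * y) * x) * z = x * (y * (x * z))

/-- A subloop: contains `1`, closed under multiplication and two-sided inverses. -/
def IsSubloop (S : Set Q) : Prop :=
  (1 : Q) ∈ S ∧ (∀ a ∈ S, ∀ b ∈ S, a * b ∈ S) ∧
    ∀ a ∈ S, ∃ b ∈ S, a * b = 1 ∧ b * a = 1

/-- A normal subloop: `xN = Nx`, `(Nx)y = N(xy)`, `y(xN) = (yx)N`. -/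
def IsNormalSubloop (S : Set Q) : Prop :=
  IsSubloop S ∧
  (∀ x : Q, {z | ∃ n ∈ S, z = x * n} = {z | ∃ n ∈ S, z = n * x}) ∧
  (∀ x y : Q, {z | ∃ n ∈ S, z = (n * x) * y} = {z | ∃ n ∈ S, z = n * (x * y)}) ∧
  (∀ x y : Q, {z | ∃ n ∈ S, z = y * (x * n)} = {z | ∃ n ∈ S, z = (y * x) * n})

/-- A loop is simple if its only normal subloops are trivial. -/
def IsSimpleLoop (Q : Type*) [Mul Q] [One Q] : Prop :=
  ∀ S : Set Q, IsNormalSubloop S → S = {1} ∨ S = Set.univ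

/-- The centre of a loop: elements commuting and associating with everything. -/
def loopCentre (Q : Type*) [Mul Q] : Set Q :=
  {a | ∀ x y : Q, a * x = x * a ∧ (a * x) * y = a * (x * y) ∧
    (x * a) * y = x * (a * y) ∧ (x * y) * a = x * (y * a)}

end LoopDefs

/-- A prime field: `ℚ` or `𝔽ₚ`. -/
def IsPrimeField (Δ : Type*) [Field Δ] : Prop :=
  Nonempty (Δ ≃+* ℚ) ∨ ∃ p : ℕ, p.Prime ∧ Nonempty (Δ ≃+* ZMod p)


/-- The elements of the Zorn algebra all of whose matrix components lie in
the subfield `K`. -/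
def ZornIn {F : Type*} [Field F] (K : Subfield F) : Set (Zorn F) :=
  {x | x.a ∈ K ∧ x.d ∈ K ∧ (∀ i, x.u i ∈ K) ∧ (∀ i, x.v i ∈ K)}

/-- The copy of the Paige loop `M(K)` inside `M(F)`, for a subfield `K` of `F`. -/
def PaigeSet {F : Type*} [Field F] (K : Subfield F) : Set (Paige F) :=
  {q | ∃ x : Mstar F, x.1 ∈ ZornIn K ∧ ⟦x⟧ = q}

section Aux

variable {F : Type*} [Field F] {K K' : Subfield F}

lemma dot3_mem {x y : Fin 3 → F} (hx : ∀ i, x i ∈ K) (hy : ∀ i, y i ∈ K) :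
    dot3 x y ∈ K :=
  add_mem (add_mem (mul_mem (hx 0) (hy 0)) (mul_mem (hx 1) (hy 1))) (mul_mem (hx 2) (hy 2))

lemma cross3_mem {x y : Fin 3 → F} (hx : ∀ i, x i ∈ K) (hy : ∀ i, y i ∈ K) (i : Fin 3) :
    cross3 x y i ∈ K := by
  fin_cases i <;>
    simp only [cross3, Matrix.cons_val_zero, Matrix.cons_val_one, Matrix.head_cons,
      Matrix.cons_val_two, Matrix.tail_cons, Fin.isValue] <;>
    exact sub_mem (mul_mem (hx _) (hy _)) (mul_mem (hx _) (hy _))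

lemma zornIn_one : (1 : Zorn F) ∈ ZornIn K := by
  refine ⟨one_mem K, one_mem K, ?_, ?_⟩ <;> intro i <;>
    simp only [Zorn.one_u, Zorn.one_v, Pi.zero_apply] <;> exact zero_mem K

lemma zornIn_mul {x y : Zorn F} (hx : x ∈ ZornIn K) (hy : y ∈ ZornIn K) :
    x * y ∈ ZornIn K := by
  obtain ⟨ha, hd, hu, hv⟩ := hx
  obtain ⟨ha', hd', hu', hv'⟩ := hy
  refine ⟨add_mem (mul_mem ha ha') (dot3_mem hu hv'),
    add_mem (mul_mem hd hd') (dot3_mem hv hu'), fun i => ?_, fun i => ?_⟩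
  · exact sub_mem (add_mem (mul_mem ha (hu' i)) (mul_mem hd' (hu i))) (cross3_mem hv hv' i)
  · exact add_mem (add_mem (mul_mem ha' (hv i)) (mul_mem hd (hv' i))) (cross3_mem hu hu' i)

/-- Conjugate of a Zorn matrix. -/
def zconj (x : Zorn F) : Zorn F := ⟨x.d, fun i => -x.u i, fun i => -x.v i, x.a⟩

lemma zconj_norm (x : Zorn F) : Zorn.norm (zconj x) = Zorn.norm x := by
  simp only [Zorn.norm, zconj, dot3]; ring

lemma mul_zconj (x : Zorn F) (hx : Zorn.norm x = 1) : x * zconj x = 1 := by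
  simp only [Zorn.norm, dot3] at hx
  refine Zorn.ext ?_ ?_ ?_ ?_
  · show x.a * x.d + dot3 x.u (fun i => -x.v i) = 1
    simp only [dot3]; linear_combination hx
  · funext i
    show x.a * -x.u i + x.a * x.u i - cross3 x.v (fun i => -x.v i) i = (0 : Fin 3 → F) i
    fin_cases i <;> simp [cross3] <;> ring
  · funext i
    show x.d * x.v i + x.d * -x.v i + cross3 x.u (fun i => -x.u i) i = (0 : Fin 3 → F) i
    fin_cases i <;> simp [cross3] <;> ring
  · show x.d * x.a + dot3 x.v (fun i => -x.u i) = 1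
    simp only [dot3]; linear_combination hx

lemma zconj_mul (x : Zorn F) (hx : Zorn.norm x = 1) : zconj x * x = 1 := by
  simp only [Zorn.norm, dot3] at hx
  refine Zorn.ext ?_ ?_ ?_ ?_
  · show x.d * x.a + dot3 (fun i => -x.u i) x.v = 1
    simp only [dot3]; linear_combination hx
  · funext i
    show x.d * x.u i + x.d * -x.u i - cross3 (fun i => -x.v i) x.v i = (0 : Fin 3 → F) i
    fin_cases i <;> simp [cross3] <;> ring
  · funext i
    show x.a * -x.v i + x.a * x.v i + cross3 (fun i => -x.u i) x.u i = (0 : Fin 3 → F) i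
    fin_cases i <;> simp [cross3] <;> ring
  · show x.a * x.d + dot3 (fun i => -x.v i) x.u = 1
    simp only [dot3]; linear_combination hx

lemma zconj_mem {x : Zorn F} (hx : x ∈ ZornIn K) : zconj x ∈ ZornIn K := by
  obtain ⟨ha, hd, hu, hv⟩ := hx
  exact ⟨hd, ha, fun i => neg_mem (hu i), fun i => neg_mem (hv i)⟩

lemma paigeSet_isSubloop (K : Subfield F) : IsSubloop (PaigeSet K) := by
  refine ⟨⟨1, zornIn_one, rfl⟩, ?_, ?_⟩
  · rintro a ⟨x, hx, rfl⟩ b ⟨y, hy, rfl⟩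
    exact ⟨x * y, zornIn_mul hx hy, rfl⟩
  · rintro a ⟨x, hx, rfl⟩
    have hn : Zorn.norm (zconj x.1) = 1 := by rw [zconj_norm, x.2]
    set xc : Mstar F := ⟨zconj x.1, hn⟩ with hxc
    have h1 : x * xc = 1 := Subtype.ext (mul_zconj x.1 x.2)
    have h2 : xc * x = 1 := Subtype.ext (zconj_mul x.1 x.2)
    refine ⟨⟦xc⟧, ⟨xc, zconj_mem hx, rfl⟩, ?_, ?_⟩
    · show ⟦x * xc⟧ = (1 : Paige F)
      rw [h1]; rfl
    · show ⟦xc * x⟧ = (1 : Paige F)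
      rw [h2]; rfl

lemma zornIn_mono (h : K ≤ K') {x : Zorn F} (hx : x ∈ ZornIn K) : x ∈ ZornIn K' :=
  ⟨h hx.1, h hx.2.1, fun i => h (hx.2.2.1 i), fun i => h (hx.2.2.2 i)⟩

lemma paigeSet_mono (h : K ≤ K') : PaigeSet K ⊆ PaigeSet K' := by
  rintro a ⟨x, hx, rfl⟩
  exact ⟨x, zornIn_mono h hx, rfl⟩

lemma paigeSet_le (h : PaigeSet K ⊆ PaigeSet K') : K ≤ K' := by
  intro t ht
  set x : Mstar F := ⟨⟨1, ![t, 0, 0], 0, 1⟩, by simp [Zorn.norm, dot3]⟩ with hxdef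
  have hxK : x.1 ∈ ZornIn K := by
    refine ⟨one_mem K, one_mem K, fun i => ?_, fun i => ?_⟩
    · fin_cases i
      · simpa [hxdef] using ht
      · simp [hxdef]
      · simp [hxdef]
    · exact zero_mem K
  obtain ⟨y, hy, hyx⟩ := h ⟨x, hxK, rfl⟩
  have hrel : y.1 = x.1 ∨ y.1 = -x.1 := Quotient.exact hyx
  have hu0 : y.1.u 0 ∈ K' := hy.2.2.1 0
  rcases hrel with h1 | h1
  · have : y.1.u 0 = t := by rw [h1]; simp [hxdef]
    rwa [this] at hu0
  · have : y.1.u 0 = -t := by rw [h1]; simp [hxdef]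
    rw [this] at hu0
    simpa using neg_mem hu0

lemma zornIn_inf {x : Zorn F} : x ∈ ZornIn (K ⊓ K') ↔ x ∈ ZornIn K ∧ x ∈ ZornIn K' := by
  constructor
  · intro h
    exact ⟨zornIn_mono inf_le_left h, zornIn_mono inf_le_right h⟩
  · rintro ⟨⟨h1, h2, h3, h4⟩, ⟨h1', h2', h3', h4'⟩⟩
    exact ⟨⟨h1, h1'⟩, ⟨h2, h2'⟩, fun i => ⟨h3 i, h3' i⟩, fun i => ⟨h4 i, h4' i⟩⟩

lemma zornIn_neg {x : Zorn F} (hx : x ∈ ZornIn K) : -x ∈ ZornIn K := by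
  obtain ⟨h1, h2, h3, h4⟩ := hx
  exact ⟨neg_mem h1, neg_mem h2, fun i => neg_mem (h3 i), fun i => neg_mem (h4 i)⟩

lemma paigeSet_inf : PaigeSet (K ⊓ K') = PaigeSet K ∩ PaigeSet K' := by
  apply Set.Subset.antisymm
  · intro a ha
    exact ⟨paigeSet_mono inf_le_left ha, paigeSet_mono inf_le_right ha⟩
  · rintro a ⟨⟨x, hx, rfl⟩, ⟨y, hy, hyx⟩⟩
    have hrel : y.1 = x.1 ∨ y.1 = -x.1 := Quotient.exact hyx
    refine ⟨x, zornIn_inf.2 ⟨hx, ?_⟩, rfl⟩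
    rcases hrel with h1 | h1
    · rwa [h1] at hy
    · have : x.1 = -y.1 := by rw [h1, Zorn.neg_neg']
      rw [this]
      exact zornIn_neg hy

end Aux

/-- `F ↦ M(F)` is an inclusion-preserving bijection from the Galois
extensions of the prime field `Δ` inside its algebraic closure `P` onto the
subloops of `M(P)` of the form `M(F)`; intersections of fields correspond to
intersections of loops. -/
theorem paige_lattice_order_iso (Δ : Type) [Field Δ] (hΔ : IsPrimeField Δ)
    (P : Type) [Field P] [Algebra Δ P] [IsAlgClosure Δ P] :
    (∃ e : {F : IntermediateField Δ P // IsGalois Δ F} ≃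
        {S : Set (Paige P) // IsSubloop S ∧
          ∃ F : IntermediateField Δ P, IsGalois Δ F ∧ S = PaigeSet F.toSubfield},
      (∀ F, ((e F : Set (Paige P))) = PaigeSet (F : IntermediateField Δ P).toSubfield) ∧
      (∀ F F' : {F : IntermediateField Δ P // IsGalois Δ F},
        (F : IntermediateField Δ P) ≤ F' ↔ (e F : Set (Paige P)) ⊆ (e F' : Set (Paige P)))) ∧
    (∀ F F' : IntermediateField Δ P, IsGalois Δ F → IsGalois Δ F' →
      PaigeSet (F ⊓ F').toSubfield = PaigeSet F.toSubfield ∩ PaigeSet F'.toSubfield) := by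
  have hsub_le : ∀ F F' : IntermediateField Δ P,
      F.toSubfield ≤ F'.toSubfield ↔ F ≤ F' := by
    intro F F'
    constructor <;> intro h x hx <;> exact h hx
  have hinf : ∀ F F' : IntermediateField Δ P,
      (F ⊓ F').toSubfield = F.toSubfield ⊓ F'.toSubfield := by
    intro F F'
    ext x
    simp [IntermediateField.mem_toSubfield, Subfield.mem_inf, IntermediateField.mem_inf]
  have hinj : ∀ F F' : {F : IntermediateField Δ P // IsGalois Δ F},
      PaigeSet (F : IntermediateField Δ P).toSubfield =
        PaigeSet (F' : IntermediateField Δ P).toSubfield → F = F' := by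
    intro F F' h
    refine Subtype.ext (le_antisymm ?_ ?_)
    · exact (hsub_le _ _).1 (paigeSet_le (h ▸ le_refl _))
    · exact (hsub_le _ _).1 (paigeSet_le (h ▸ le_refl _))
  refine ⟨⟨Equiv.ofBijective
      (fun F => ⟨PaigeSet (F : IntermediateField Δ P).toSubfield,
        paigeSet_isSubloop _, F.1, F.2, rfl⟩) ⟨?_, ?_⟩, fun F => rfl, ?_⟩, ?_⟩
  · intro F F' h
    exact hinj F F' (congrArg Subtype.val h)
  · rintro ⟨S, hS, F', hGal, rfl⟩
    exact ⟨⟨F', hGal⟩, rfl⟩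
  · intro F F'
    constructor
    · intro h
      exact paigeSet_mono ((hsub_le _ _).2 h)
    · intro h
      exact (hsub_le _ _).1 (paigeSet_le h)
  · intro F F' _ _
    rw [hinf]
    exact paigeSet_inf

end Paper
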